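/- arXiv:1210.4142 — 6 statements merged into one kernel-verified Lean document; each statement's English description precedes it below -/
import Mathlib

section
/- If M₁ and M₂ are two positive operator valued measures (POVMs) with countable outcome sets on a Hilbert space, T₁ and T₂ are trivial POVMs (each effect a scalar multiple of the identity, given by probability distributions p₁ and p₂), and 0 ≤ λ ≤ 1, then the POVMs λM₁ + (1−λ)T₁ and (1−λ)M₂ + λT₂ are jointly measurable; an explicit joint observable is G(j,k) = λ p₂(k) M₁(j) + (1−λ) p₁(j) M₂(k). -/
open scoped ComplexOrder
/-- A POVM with countable outcome set `J` on the Hilbert space `ℂ^n`,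
represented by matrices: each effect is positive semidefinite and they sum to the identity. -/
def IsPOVM {n : ℕ} {J : Type} [Countable J] (M : J → Matrix (Fin n) (Fin n) ℂ) : Prop :=
  (∀ j, (M j).PosSemidef) ∧ ∑' j, M j = 1

/-- A probability distribution on a countable set. -/
def IsProbDist {J : Type} [Countable J] (p : J → ℝ) : Prop :=
  (∀ j, 0 ≤ p j) ∧ ∑' j, p j = 1

/-- A trivial POVM: each effect is a scalar multiple of the identity,
given by a probability distribution. -/
def IsTrivialPOVM {n : ℕ} {J : Type} [Countable J] (T : J → Matrix (Fin n) (Fin n) ℂ) : Prop :=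
  ∃ p : J → ℝ, IsProbDist p ∧ ∀ j, T j = ((p j : ℝ) : ℂ) • 1

/-- Joint measurability: existence of a joint POVM with the two given POVMs as marginals. -/
def JointlyMeasurable {n : ℕ} {J K : Type} [Countable J] [Countable K]
    (M₁ : J → Matrix (Fin n) (Fin n) ℂ) (M₂ : K → Matrix (Fin n) (Fin n) ℂ) : Prop :=
  ∃ G : J × K → Matrix (Fin n) (Fin n) ℂ, IsPOVM G ∧
    (∀ j, ∑' k, G (j, k) = M₁ j) ∧ (∀ k, ∑' j, G (j, k) = M₂ k)

/-- The mixture `l • M + (1 - l) • T`, effectwise. -/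
def mix {n : ℕ} {J : Type} [Countable J] (l : ℝ)
    (M T : J → Matrix (Fin n) (Fin n) ℂ) : J → Matrix (Fin n) (Fin n) ℂ :=
  fun j => ((l : ℝ) : ℂ) • M j + (((1 - l : ℝ)) : ℂ) • T j

attribute [local instance] Matrix.normedAddCommGroup Matrix.normedSpace

open Matrix in
lemma posSemidef_real_smul {n : ℕ} {c : ℝ} (hc : 0 ≤ c) {A : Matrix (Fin n) (Fin n) ℂ}
    (hA : A.PosSemidef) : ((c : ℂ) • A).PosSemidef := by
  refine ⟨?_, fun x => ?_⟩
  · have h : ((c : ℂ) • A)ᴴ = (c : ℂ) • A := by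
      rw [Matrix.conjTranspose_smul, hA.1.eq]
      simp [Complex.conj_ofReal]
    exact h
  · exact (hA.smul (a := (c : ℂ)) (by exact_mod_cast hc)).2 x

lemma summable_of_tsum_eq_one {n : ℕ} {J : Type} [Countable J]
    (M : J → Matrix (Fin n) (Fin n) ℂ) (h : ∑' j, M j = 1) : Summable M := by
  rcases Nat.eq_zero_or_pos n with h0 | hn
  · subst h0
    haveI : Subsingleton (Matrix (Fin 0) (Fin 0) ℂ) :=
      ⟨fun a b => by ext i j; exact i.elim0⟩
    have hM : M = fun _ => 0 := funext fun j => Subsingleton.elim _ _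
    rw [hM]; exact summable_zero
  · by_contra hs
    rw [tsum_eq_zero_of_not_summable hs] at h
    have h2 : (0 : Matrix (Fin n) (Fin n) ℂ) ⟨0, hn⟩ ⟨0, hn⟩ = 1 := by
      rw [h]; simp [Matrix.one_apply]
    simp at h2

lemma summable_of_probdist {J : Type} [Countable J] {p : J → ℝ} (h : IsProbDist p) :
    Summable p := by
  by_contra hs
  rw [IsProbDist, tsum_eq_zero_of_not_summable hs] at h
  exact one_ne_zero h.2.symm

/-- Mixing two POVMs with complementary weights with trivial observables
yields a jointly measurable pair; the explicit joint observable is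
`G(j,k) = λ p₂(k) M₁(j) + (1−λ) p₁(j) M₂(k)`. -/
theorem mixed_povms_jointly_measurable {n : ℕ} {J K : Type} [Countable J] [Countable K]
    (M₁ : J → Matrix (Fin n) (Fin n) ℂ) (M₂ : K → Matrix (Fin n) (Fin n) ℂ)
    (hM₁ : IsPOVM M₁) (hM₂ : IsPOVM M₂)
    (p₁ : J → ℝ) (p₂ : K → ℝ) (hp₁ : IsProbDist p₁) (hp₂ : IsProbDist p₂)
    (T₁ : J → Matrix (Fin n) (Fin n) ℂ) (T₂ : K → Matrix (Fin n) (Fin n) ℂ)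
    (hT₁ : ∀ j, T₁ j = ((p₁ j : ℝ) : ℂ) • 1) (hT₂ : ∀ k, T₂ k = ((p₂ k : ℝ) : ℂ) • 1)
    (l : ℝ) (hl0 : 0 ≤ l) (hl1 : l ≤ 1) :
    (IsPOVM (fun jk : J × K =>
        ((l * p₂ jk.2 : ℝ) : ℂ) • M₁ jk.1 + (((1 - l) * p₁ jk.1 : ℝ) : ℂ) • M₂ jk.2) ∧
      (∀ j, ∑' k, (((l * p₂ k : ℝ) : ℂ) • M₁ j + (((1 - l) * p₁ j : ℝ) : ℂ) • M₂ k)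
          = mix l M₁ T₁ j) ∧
      (∀ k, ∑' j, (((l * p₂ k : ℝ) : ℂ) • M₁ j + (((1 - l) * p₁ j : ℝ) : ℂ) • M₂ k)
          = mix (1 - l) M₂ T₂ k)) ∧
    JointlyMeasurable (mix l M₁ T₁) (mix (1 - l) M₂ T₂) := by
  obtain ⟨hM₁pos, hM₁sum⟩ := hM₁
  obtain ⟨hM₂pos, hM₂sum⟩ := hM₂
  have hsM₁ : Summable M₁ := summable_of_tsum_eq_one M₁ hM₁sum
  have hsM₂ : Summable M₂ := summable_of_tsum_eq_one M₂ hM₂sum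
  have hsp₁ : Summable p₁ := summable_of_probdist hp₁
  have hsp₂ : Summable p₂ := summable_of_probdist hp₂
  have hsp₁c : Summable fun j => ((p₁ j : ℝ) : ℂ) := Complex.summable_ofReal.mpr hsp₁
  have hsp₂c : Summable fun k => ((p₂ k : ℝ) : ℂ) := Complex.summable_ofReal.mpr hsp₂
  have htp₁c : ∑' j, ((p₁ j : ℝ) : ℂ) = 1 := by
    rw [← Complex.ofReal_tsum, hp₁.2, Complex.ofReal_one]
  have htp₂c : ∑' k, ((p₂ k : ℝ) : ℂ) = 1 := by
    rw [← Complex.ofReal_tsum, hp₂.2, Complex.ofReal_one]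
  have hl1' : (0:ℝ) ≤ 1 - l := sub_nonneg.mpr hl1
  -- fiberwise summability
  have sA : ∀ j, Summable fun k => ((l * p₂ k : ℝ) : ℂ) • M₁ j := by
    intro j
    have := (hsp₂c.mul_left ((l : ℝ) : ℂ)).smul_const (M₁ j)
    simpa [Complex.ofReal_mul] using this
  have sB : ∀ j, Summable fun k => (((1 - l) * p₁ j : ℝ) : ℂ) • M₂ k :=
    fun j => hsM₂.const_smul _
  have sA' : ∀ k, Summable fun j => ((l * p₂ k : ℝ) : ℂ) • M₁ j :=
    fun k => hsM₁.const_smul _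
  have sB' : ∀ k, Summable fun j => (((1 - l) * p₁ j : ℝ) : ℂ) • M₂ k := by
    intro k
    have := (hsp₁c.mul_left (((1 - l : ℝ)) : ℂ)).smul_const (M₂ k)
    simpa [Complex.ofReal_mul] using this
  -- marginals
  have key1 : ∀ j, ∑' k, (((l * p₂ k : ℝ) : ℂ) • M₁ j + (((1 - l) * p₁ j : ℝ) : ℂ) • M₂ k)
      = mix l M₁ T₁ j := by
    intro j
    rw [Summable.tsum_add (sA j) (sB j)]
    have h1 : ∑' k, ((l * p₂ k : ℝ) : ℂ) • M₁ j = ((l : ℝ) : ℂ) • M₁ j := by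
      simp_rw [Complex.ofReal_mul]
      rw [Summable.tsum_smul_const (hsp₂c.mul_left _) (M₁ j), tsum_mul_left, htp₂c, mul_one]
    have h2 : ∑' k, (((1 - l) * p₁ j : ℝ) : ℂ) • M₂ k
        = (((1 - l) * p₁ j : ℝ) : ℂ) • (1 : Matrix (Fin n) (Fin n) ℂ) := by
      rw [Summable.tsum_const_smul _ hsM₂, hM₂sum]
    rw [h1, h2]
    simp only [mix, hT₁, smul_smul]
    push_cast
    module
  have key2 : ∀ k, ∑' j, (((l * p₂ k : ℝ) : ℂ) • M₁ j + (((1 - l) * p₁ j : ℝ) : ℂ) • M₂ k)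
      = mix (1 - l) M₂ T₂ k := by
    intro k
    rw [Summable.tsum_add (sA' k) (sB' k)]
    have h1 : ∑' j, ((l * p₂ k : ℝ) : ℂ) • M₁ j
        = ((l * p₂ k : ℝ) : ℂ) • (1 : Matrix (Fin n) (Fin n) ℂ) := by
      rw [Summable.tsum_const_smul _ hsM₁, hM₁sum]
    have h2 : ∑' j, (((1 - l) * p₁ j : ℝ) : ℂ) • M₂ k = (((1 - l : ℝ)) : ℂ) • M₂ k := by
      simp_rw [Complex.ofReal_mul]
      rw [Summable.tsum_smul_const (hsp₁c.mul_left _) (M₂ k), tsum_mul_left, htp₁c, mul_one]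
    rw [h1, h2]
    simp only [mix, hT₂, smul_smul, sub_sub_cancel]
    push_cast
    module
  -- positivity
  have hpos : ∀ jk : J × K,
      (((l * p₂ jk.2 : ℝ) : ℂ) • M₁ jk.1 + (((1 - l) * p₁ jk.1 : ℝ) : ℂ) • M₂ jk.2).PosSemidef :=
    fun jk => (posSemidef_real_smul (mul_nonneg hl0 (hp₂.1 jk.2)) (hM₁pos jk.1)).add
      (posSemidef_real_smul (mul_nonneg hl1' (hp₁.1 jk.1)) (hM₂pos jk.2))
  -- summability over the product
  have hnM₁ : Summable fun j => ‖M₁ j‖ := hsM₁.norm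
  have hnM₂ : Summable fun k => ‖M₂ k‖ := hsM₂.norm
  have hA : Summable fun jk : J × K => ((l * p₂ jk.2 : ℝ) : ℂ) • M₁ jk.1 := by
    apply Summable.of_norm_bounded (hnM₁.mul_of_nonneg (hsp₂.mul_left l)
      (fun j => norm_nonneg _) (fun k => mul_nonneg hl0 (hp₂.1 k)))
    intro jk
    rw [norm_smul, Complex.norm_real, Real.norm_eq_abs,
      abs_of_nonneg (mul_nonneg hl0 (hp₂.1 jk.2)), mul_comm]
  have hB : Summable fun jk : J × K => (((1 - l) * p₁ jk.1 : ℝ) : ℂ) • M₂ jk.2 := by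
    apply Summable.of_norm_bounded ((hsp₁.mul_left (1 - l)).mul_of_nonneg hnM₂
      (fun j => mul_nonneg hl1' (hp₁.1 j)) (fun k => norm_nonneg _))
    intro jk
    rw [norm_smul, Complex.norm_real, Real.norm_eq_abs,
      abs_of_nonneg (mul_nonneg hl1' (hp₁.1 jk.1))]
  have hGsum : Summable fun jk : J × K =>
      ((l * p₂ jk.2 : ℝ) : ℂ) • M₁ jk.1 + (((1 - l) * p₁ jk.1 : ℝ) : ℂ) • M₂ jk.2 := hA.add hB
  -- total sum
  have hsT₁ : Summable fun j => ((p₁ j : ℝ) : ℂ) • (1 : Matrix (Fin n) (Fin n) ℂ) :=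
    hsp₁c.smul_const _
  have htot : ∑' jk : J × K,
      (((l * p₂ jk.2 : ℝ) : ℂ) • M₁ jk.1 + (((1 - l) * p₁ jk.1 : ℝ) : ℂ) • M₂ jk.2) = 1 := by
    rw [Summable.tsum_prod hGsum]
    calc (∑' j, ∑' k, (((l * p₂ k : ℝ) : ℂ) • M₁ j + (((1 - l) * p₁ j : ℝ) : ℂ) • M₂ k))
        = ∑' j, mix l M₁ T₁ j := tsum_congr key1
      _ = 1 := by
          simp only [mix, hT₁]
          rw [Summable.tsum_add (hsM₁.const_smul _) (hsT₁.const_smul _),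
            Summable.tsum_const_smul _ hsM₁, hM₁sum, Summable.tsum_const_smul _ hsT₁,
            Summable.tsum_smul_const hsp₁c, htp₁c, one_smul, ← add_smul]
          norm_num
  refine ⟨⟨⟨hpos, htot⟩, key1, key2⟩, ?_⟩
  exact ⟨fun jk => ((l * p₂ jk.2 : ℝ) : ℂ) • M₁ jk.1 + (((1 - l) * p₁ jk.1 : ℝ) : ℂ) • M₂ jk.2,
    ⟨hpos, htot⟩, key1, key2⟩
end

section
/- For the two sharp qubit observables M_x(±1) = (I ± σ_x)/2 and M_y(±1) = (I ± σ_y)/2 on ℂ², and the uniform trivial observable T(±1) = I/2, the smeared observables λM_x + (1−λ)T and μM_y + (1−μ)T are jointly measurable if λ² + μ² ≤ 1. -/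
open scoped ComplexOrder
/-- The Pauli matrix `σ_x`. -/
def sigmaX : Matrix (Fin 2) (Fin 2) ℂ := !![0, 1; 1, 0]

/-- The Pauli matrix `σ_y`. -/
def sigmaY : Matrix (Fin 2) (Fin 2) ℂ := !![0, -Complex.I; Complex.I, 0]

/-- The sign `±1` associated to a Boolean outcome. -/
def sgn (b : Bool) : ℝ := if b then 1 else -1

/-- The smeared observable `λ M_x + (1-λ) T`, i.e. `b ↦ (I + sgn b · λ σ_x)/2`. -/
noncomputable def smearedX (l : ℝ) : Bool → Matrix (Fin 2) (Fin 2) ℂ :=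
  fun b => (1 / 2 : ℂ) • (1 + ((sgn b * l : ℝ) : ℂ) • sigmaX)

/-- The smeared observable `μ M_y + (1-μ) T`, i.e. `b ↦ (I + sgn b · μ σ_y)/2`. -/
noncomputable def smearedY (m : ℝ) : Bool → Matrix (Fin 2) (Fin 2) ℂ :=
  fun b => (1 / 2 : ℂ) • (1 + ((sgn b * m : ℝ) : ℂ) • sigmaY)

private lemma quad' (A B t : ℝ) (hA : 0 ≤ A) (hB : 0 ≤ B) (ht : t^2 ≤ A*B) :
    0 ≤ A + B + 2*t := by
  nlinarith [sq_nonneg (A-B), sq_nonneg (A+B+2*t), sq_nonneg (A+B)]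

private lemma aux_psd (a b : ℝ) (hab : a ^ 2 + b ^ 2 ≤ 1) :
    ((1/4 : ℂ) • (1 + ((a:ℝ):ℂ) • sigmaX + ((b:ℝ):ℂ) • sigmaY)).PosSemidef := by
  have hM : (1/4 : ℂ) • (1 + ((a:ℝ):ℂ) • sigmaX + ((b:ℝ):ℂ) • sigmaY)
      = !![(1/4 : ℂ), (1/4) * (a - b * Complex.I); (1/4) * (a + b * Complex.I), 1/4] := by
    ext i j
    fin_cases i <;> fin_cases j <;>
      simp [sigmaX, sigmaY, Matrix.one_apply] <;> ring
  rw [hM]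
  rw [Matrix.posSemidef_iff_dotProduct_mulVec]
  constructor
  · ext i j
    fin_cases i <;> fin_cases j <;>
      simp [Matrix.conjTranspose_apply] <;> ring_nf
  · intro x
    rw [Complex.le_def]
    set p := (x 0).re; set q := (x 0).im; set r := (x 1).re; set s := (x 1).im
    constructor
    · simp [dotProduct, Matrix.mulVec, Fin.sum_univ_two, Complex.add_re, Complex.mul_re,
        Complex.mul_im, Complex.add_im, Complex.sub_re, Complex.sub_im]
      ring_nf
      have key : (a*(p*r+q*s)+b*(p*s-q*r))^2 ≤ (p^2+q^2)*(r^2+s^2) := by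
        nlinarith [sq_nonneg (a*(p*s-q*r) - b*(p*r+q*s)), sq_nonneg (p*r+q*s),
          sq_nonneg (p*s-q*r), sq_nonneg (a*(p*r+q*s)+b*(p*s-q*r))]
      have := quad' (p^2+q^2) (r^2+s^2) (a*(p*r+q*s)+b*(p*s-q*r))
        (by positivity) (by positivity) key
      nlinarith [this]
    · simp [dotProduct, Matrix.mulVec, Fin.sum_univ_two, Complex.add_re, Complex.mul_re,
        Complex.mul_im, Complex.add_im, Complex.sub_re, Complex.sub_im]
      ring

/-- The unbiased smearings of two orthogonal spin-1/2 observables are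
jointly measurable whenever `λ² + μ² ≤ 1`. -/
theorem smeared_spin_jointly_measurable (l m : ℝ)
    (hl0 : 0 ≤ l) (hl1 : l ≤ 1) (hm0 : 0 ≤ m) (hm1 : m ≤ 1)
    (h : l ^ 2 + m ^ 2 ≤ 1) :
    JointlyMeasurable (smearedX l) (smearedY m) := by
  refine ⟨fun p => (1/4 : ℂ) • (1 + ((sgn p.1 * l : ℝ) : ℂ) • sigmaX
      + ((sgn p.2 * m : ℝ) : ℂ) • sigmaY), ⟨?_, ?_⟩, ?_, ?_⟩
  · intro p
    apply aux_psd
    have h1 : (sgn p.1)^2 = 1 := by cases p.1 <;> simp [sgn]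
    have h2 : (sgn p.2)^2 = 1 := by cases p.2 <;> simp [sgn]
    calc (sgn p.1 * l)^2 + (sgn p.2 * m)^2 = (sgn p.1)^2 * l^2 + (sgn p.2)^2 * m^2 := by ring
    _ = l^2 + m^2 := by rw [h1, h2]; ring
    _ ≤ 1 := h
  · rw [tsum_fintype, Fintype.sum_prod_type, Fintype.sum_bool, Fintype.sum_bool,
      Fintype.sum_bool]
    simp only [sgn, if_true, if_false]
    push_cast
    module
  · intro j
    rw [tsum_fintype, Fintype.sum_bool]
    show _ = (1 / 2 : ℂ) • (1 + ((sgn j * l : ℝ) : ℂ) • sigmaX)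
    cases j <;> · simp only [sgn, if_true, if_false]; push_cast; module
  · intro k
    rw [tsum_fintype, Fintype.sum_bool]
    show _ = (1 / 2 : ℂ) • (1 + ((sgn k * m : ℝ) : ℂ) • sigmaY)
    cases k <;> · simp only [sgn, if_true, if_false]; push_cast; module
end

section
/- For the qubit observables λM_x + (1−λ)T and μM_y + (1−μ)T with the uniform trivial observable T(±1)=I/2, joint measurability fails whenever λ² + μ² > 1. -/
open scoped ComplexOrder


lemma offdiag_key (M : Matrix (Fin 2) (Fin 2) ℂ) (hM : M.PosSemidef) :
    0 ≤ (M 0 0).re ∧ 0 ≤ (M 1 1).re ∧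
    2 * ‖M 0 1‖ ≤ (M 0 0).re + (M 1 1).re := by
  have h0 := hM.re_dotProduct_nonneg ![1, 0]
  have h1 := hM.re_dotProduct_nonneg ![0, 1]
  simp [dotProduct, Matrix.mulVec, Fin.sum_univ_two] at h0 h1
  have h2 := hM.re_dotProduct_nonneg ![((‖M 0 1‖ : ℝ) : ℂ), -(starRingEnd ℂ) (M 0 1)]
  have hherm : M 1 0 = (starRingEnd ℂ) (M 0 1) := (hM.1.apply 1 0).symm
  have him : (M 1 1).im = 0 := by
    have := hM.1.apply 1 1
    have h := congrArg Complex.im this; simp [Complex.ext_iff] at h; linarith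
  simp [dotProduct, Matrix.mulVec, Fin.sum_univ_two, hherm, him] at h2
  refine ⟨h0, h1, ?_⟩
  have hq : 0 ≤ ‖M 0 1‖ := norm_nonneg _
  have hsq : ‖M 0 1‖ * ‖M 0 1‖ =
      (M 0 1).re * (M 0 1).re + (M 0 1).im * (M 0 1).im := by
    rw [← Complex.normSq_apply, Complex.normSq_eq_norm_sq]; ring
  rcases eq_or_lt_of_le hq with hq0 | hq0
  · rw [← hq0]; linarith
  · nlinarith [mul_pos hq0 hq0, h2, hsq]


set_option maxHeartbeats 1000000 in
/-- The unbiased smearings of two orthogonal spin-1/2 observables are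
incompatible whenever `λ² + μ² > 1`. -/
theorem smeared_spin_incompatible (l m : ℝ)
    (hl0 : 0 ≤ l) (hl1 : l ≤ 1) (hm0 : 0 ≤ m) (hm1 : m ≤ 1)
    (h : 1 < l ^ 2 + m ^ 2) :
    ¬ JointlyMeasurable (smearedX l) (smearedY m) := by
  rintro ⟨G, ⟨hpos, hsum⟩, hX, hY⟩
  have E : ∀ (A B : Matrix (Fin 2) (Fin 2) ℂ), A = B → ∀ i j, A i j = B i j :=
    fun A B hAB i j => by rw [hAB]
  have hXt := hX true
  have hYt := hY true
  rw [tsum_fintype, Fintype.sum_bool] at hXt hYt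
  rw [tsum_fintype] at hsum
  rw [show (Finset.univ : Finset (Bool × Bool)) = {(true,true),(true,false),(false,true),(false,false)} by decide] at hsum
  have e1 := E _ _ hXt 0 1
  have e3 := E _ _ hYt 0 1
  have S01 := E _ _ hsum 0 1
  have S00 := E _ _ hsum 0 0
  have S11 := E _ _ hsum 1 1
  simp [smearedX, smearedY, sigmaX, sigmaY, sgn, Matrix.one_apply,
    Matrix.add_apply, Matrix.smul_apply, Finset.sum_insert, Matrix.sum_apply] at e1 e3 S01 S00 S11
  -- abbreviations
  set ctt := G (true, true) 0 1
  set ctf := G (true, false) 0 1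
  set cft := G (false, true) 0 1
  set cff := G (false, false) 0 1
  have hz1 : ctt - cff = 2⁻¹ * l - 2⁻¹ * (m * Complex.I) := by
    have : cff = -(ctt + ctf + cft) := by linear_combination S01
    rw [this]; linear_combination e1 + e3
  have hz2 : ctf - cft = 2⁻¹ * l + 2⁻¹ * (m * Complex.I) := by
    linear_combination e1 - e3
  have ktt := offdiag_key _ (hpos (true, true))
  have ktf := offdiag_key _ (hpos (true, false))
  have kft := offdiag_key _ (hpos (false, true))
  have kff := offdiag_key _ (hpos (false, false))
  have hA : (G (true,true) 0 0).re + (G (true,false) 0 0).re + (G (false,true) 0 0).re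
      + (G (false,false) 0 0).re + ((G (true,true) 1 1).re + (G (true,false) 1 1).re
      + (G (false,true) 1 1).re + (G (false,false) 1 1).re) = 2 := by
    have h0 := congrArg Complex.re S00
    have h1 := congrArg Complex.re S11
    simp [Complex.add_re] at h0 h1
    linarith
  have b1 : ‖ctt - cff‖ ≤ ‖ctt‖ + ‖cff‖ := by
    calc ‖ctt - cff‖ ≤ ‖ctt‖ + ‖-cff‖ := by
          simpa [sub_eq_add_neg] using norm_add_le ctt (-cff)
      _ = ‖ctt‖ + ‖cff‖ := by rw [norm_neg]
  have b2 : ‖ctf - cft‖ ≤ ‖ctf‖ + ‖cft‖ := by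
    calc ‖ctf - cft‖ ≤ ‖ctf‖ + ‖-cft‖ := by
          simpa [sub_eq_add_neg] using norm_add_le ctf (-cft)
      _ = ‖ctf‖ + ‖cft‖ := by rw [norm_neg]
  have hcon : (2⁻¹ * l + 2⁻¹ * (m * Complex.I) : ℂ)
      = (starRingEnd ℂ) (2⁻¹ * l - 2⁻¹ * (m * Complex.I)) := by
    simp [Complex.ext_iff]
  have habs2 : ‖ctf - cft‖ = ‖ctt - cff‖ := by
    rw [hz1, hz2, hcon, Complex.norm_conj]
  have hq : 2 * ‖ctt - cff‖ ≤ 1 := by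
    have := ktt.2.2; have := ktf.2.2; have := kft.2.2; have := kff.2.2
    linarith [b1, b2, habs2, hA, ktt.2.2, ktf.2.2, kft.2.2, kff.2.2]
  have hval : ‖ctt - cff‖ ^ 2 = (l ^ 2 + m ^ 2) / 4 := by
    rw [hz1, Complex.sq_norm, Complex.normSq_apply]
    simp [Complex.sub_re, Complex.sub_im, Complex.mul_re, Complex.mul_im]
    ring
  have hqq : ‖ctt - cff‖ ≤ 1 / 2 := by linarith
  have := pow_le_pow_left₀ (norm_nonneg (ctt - cff)) hqq 2
  rw [hval] at this
  norm_num at this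
  linarith
end

section
/- Two projection valued measures on a Hilbert space are jointly measurable if and only if all their projections pairwise commute. -/
open scoped ComplexOrder
/-- A projection valued measure: mutually orthogonal (self-adjoint idempotent)
projections summing to the identity. -/
def IsPVM {n : ℕ} {J : Type} [Countable J] (P : J → Matrix (Fin n) (Fin n) ℂ) : Prop :=
  (∀ j, (P j).IsHermitian) ∧ (∀ j, P j * P j = P j) ∧
    (∀ j k, j ≠ k → P j * P k = 0) ∧ ∑' j, P j = 1

open Matrix in
/-- If `-(Bᴴ * B)` is positive semidefinite, then `B = 0`. -/
lemma eq_zero_of_neg_conjTranspose_mul_self_psd {m : ℕ} {B : Matrix (Fin m) (Fin m) ℂ}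
    (h : (-(Bᴴ * B)).PosSemidef) : B = 0 := by
  have hv : ∀ v : Fin m → ℂ, B *ᵥ v = 0 := by
    intro v
    have key : star v ⬝ᵥ (Bᴴ * B) *ᵥ v = star (B *ᵥ v) ⬝ᵥ (B *ᵥ v) := by
      rw [← Matrix.mulVec_mulVec, Matrix.dotProduct_mulVec, ← Matrix.star_mulVec]
    have h1 := h.dotProduct_mulVec_nonneg v
    rw [Matrix.neg_mulVec, dotProduct_neg, key] at h1
    have h2 : star (B *ᵥ v) ⬝ᵥ (B *ᵥ v) = 0 :=
      le_antisymm (by simpa using neg_nonneg.mp (by simpa using h1))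
        (dotProduct_star_self_nonneg _)
    exact dotProduct_star_self_eq_zero.mp h2
  ext i j
  have := congrFun (hv (Pi.single j 1)) i
  simpa [Matrix.mulVec_single] using this

open Matrix MatrixOrder in
/-- Absorption: if `0 ≤ A ≤ P` with `P` a projection, then `P` absorbs `A`. -/
lemma absorb {m : ℕ} {A P : Matrix (Fin m) (Fin m) ℂ}
    (hA : A.PosSemidef) (hPh : P.IsHermitian) (hPP : P * P = P)
    (hle : (P - A).PosSemidef) : A * P = A ∧ P * A = A := by
  set S := CFC.sqrt A with hS
  set B := S * (1 - P) with hB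
  have hSh : S.IsHermitian := (CFC.sqrt_nonneg A).posSemidef.1
  have hQh : (1 - P).IsHermitian := by
    simpa using (Matrix.isHermitian_one (n := Fin m)).sub hPh
  have hBconj : Bᴴ = (1 - P) * S := by
    rw [hB, Matrix.conjTranspose_mul, hSh.eq, hQh.eq]
  have hXeq : Bᴴ * B = (1 - P) * A * (1 - P) := by
    rw [hBconj, hB, Matrix.mul_assoc, ← Matrix.mul_assoc S S, CFC.sqrt_mul_sqrt_self A hA.nonneg,
      ← Matrix.mul_assoc]
  have hQP : (1 - P) * P = 0 := by
    simp [Matrix.sub_mul, hPP]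
  have hneg : (-(Bᴴ * B)).PosSemidef := by
    have h := hle.mul_mul_conjTranspose_same (1 - P)
    have : (1 - P) * (P - A) * (1 - P)ᴴ = -(Bᴴ * B) := by
      have key : (1 - P) * (P - A) = -((1 - P) * A) := by
        rw [Matrix.mul_sub, hQP, zero_sub]
      rw [hQh.eq, hXeq, key, Matrix.neg_mul]
    rwa [this] at h
  have hB0 : B = 0 := eq_zero_of_neg_conjTranspose_mul_self_psd hneg
  have hAQ : A * (1 - P) = 0 := by
    have : S * B = A * (1 - P) := by
      rw [hB, ← Matrix.mul_assoc, CFC.sqrt_mul_sqrt_self A hA.nonneg]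
    rw [← this, hB0, Matrix.mul_zero]
  have h1 : A * P = A := by
    have := hAQ
    rw [Matrix.mul_sub, Matrix.mul_one, sub_eq_zero] at this
    exact this.symm
  refine ⟨h1, ?_⟩
  have : (A * P)ᴴ = P * A := by rw [Matrix.conjTranspose_mul, hPh.eq, hA.1.eq]
  rw [h1, hA.1.eq] at this
  exact this.symm

/-- Two projection valued measures are jointly measurable if and only if
all their projections pairwise commute. -/
theorem pvms_jointly_measurable_iff_commute {n : ℕ} {J K : Type} [Fintype J] [Fintype K]
    (P : J → Matrix (Fin n) (Fin n) ℂ) (Q : K → Matrix (Fin n) (Fin n) ℂ)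
    (hP : IsPVM P) (hQ : IsPVM Q) :
    JointlyMeasurable P Q ↔ ∀ j k, P j * Q k = Q k * P j := by
  classical
  obtain ⟨hPh, hPidem, hPorth, hPsum⟩ := hP
  obtain ⟨hQh, hQidem, hQorth, hQsum⟩ := hQ
  have hPsum' : ∑ j, P j = 1 := by rw [← tsum_fintype (L := .unconditional _)]; exact hPsum
  have hQsum' : ∑ k, Q k = 1 := by rw [← tsum_fintype (L := .unconditional _)]; exact hQsum
  constructor
  · rintro ⟨G, ⟨hGpos, hGsum⟩, hm1, hm2⟩
    have hm2' : ∀ k, ∑ j, G (j, k) = Q k := fun k => by rw [← tsum_fintype (L := .unconditional _)]; exact hm2 k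
    have hm1' : ∀ j, ∑ k, G (j, k) = P j := fun j => by rw [← tsum_fintype (L := .unconditional _)]; exact hm1 j
    have habs : ∀ j k, G (j, k) * Q k = G (j, k) ∧ Q k * G (j, k) = G (j, k) := by
      intro j k
      apply absorb (hGpos (j, k)) (hQh k) (hQidem k)
      have heq : Q k - G (j, k) = ∑ j' ∈ Finset.univ.erase j, G (j', k) := by
        rw [← hm2' k, ← Finset.add_sum_erase _ _ (Finset.mem_univ j)]
        abel
      rw [heq]
      exact Finset.sum_induction _ _ (fun a b ha hb => ha.add hb) Matrix.PosSemidef.zero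
        (fun j' _ => hGpos (j', k))
    intro j k
    have h1 : P j * Q k = G (j, k) := by
      rw [← hm1' j, Finset.sum_mul, Finset.sum_eq_single k
        (fun k' _ hk' => by
          rw [← (habs j k').1, Matrix.mul_assoc, hQorth k' k hk', Matrix.mul_zero])
        (by simp)]
      exact (habs j k).1
    have h2 : Q k * P j = G (j, k) := by
      rw [← hm1' j, Finset.mul_sum, Finset.sum_eq_single k
        (fun k' _ hk' => by
          rw [← (habs j k').2, ← Matrix.mul_assoc, hQorth k k' (Ne.symm hk'), Matrix.zero_mul])
        (by simp)]
      exact (habs j k).2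
    rw [h1, h2]
  · intro hcomm
    have hPpsd : ∀ j, (P j).PosSemidef := by
      intro j
      have h := Matrix.posSemidef_conjTranspose_mul_self (P j)
      rwa [(hPh j).eq, hPidem j] at h
    refine ⟨fun jk => P jk.1 * Q jk.2, ⟨?_, ?_⟩, ?_, ?_⟩
    · rintro ⟨j, k⟩
      have heq : P j * Q k = (Q k).conjTranspose * P j * Q k := by
        rw [(hQh k).eq, ← hcomm j k, Matrix.mul_assoc, hQidem k]
      show (P j * Q k).PosSemidef
      rw [heq]
      exact (hPpsd j).conjTranspose_mul_mul_same _
    · rw [tsum_fintype, Fintype.sum_prod_type]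
      simp_rw [← Finset.mul_sum, hQsum', Matrix.mul_one]
      exact hPsum'
    · intro j
      rw [tsum_fintype]
      show ∑ b : K, P j * Q b = P j
      rw [← Finset.mul_sum, hQsum', Matrix.mul_one]
    · intro k
      rw [tsum_fintype]
      show ∑ b : J, P b * Q k = Q k
      rw [← Finset.sum_mul, hPsum', Matrix.one_mul]
end

section
/- The joint measurability region is downward monotone: if λM₁ + (1−λ)T₁ and μM₂ + (1−μ)T₂ are jointly measurable for some trivial observables T₁, T₂, and 0 ≤ λ' ≤ λ, 0 ≤ μ' ≤ μ, then there exist trivial observables T₁', T₂' such that λ'M₁ + (1−λ')T₁' and μ'M₂ + (1−μ')T₂' are jointly measurable. -/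
open scoped ComplexOrder
/-- The joint measurability region `J(M₁,M₂)`: the set of `(λ,μ) ∈ [0,1]²` for which
some trivial observables `T₁, T₂` make `λM₁+(1−λ)T₁` and `μM₂+(1−μ)T₂` jointly measurable. -/
def JRegion {n : ℕ} {J K : Type} [Countable J] [Countable K]
    (M₁ : J → Matrix (Fin n) (Fin n) ℂ) (M₂ : K → Matrix (Fin n) (Fin n) ℂ) :
    Set (ℝ × ℝ) :=
  {x | x.1 ∈ Set.Icc (0 : ℝ) 1 ∧ x.2 ∈ Set.Icc (0 : ℝ) 1 ∧
    ∃ (T₁ : J → Matrix (Fin n) (Fin n) ℂ) (T₂ : K → Matrix (Fin n) (Fin n) ℂ),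
      IsTrivialPOVM T₁ ∧ IsTrivialPOVM T₂ ∧
        JointlyMeasurable (mix x.1 M₁ T₁) (mix x.2 M₂ T₂)}

section Aux

open scoped ComplexOrder

attribute [local instance] Matrix.normedAddCommGroup Matrix.normedSpace

open Matrix in

private lemma psd_csmul {n : ℕ} {A : Matrix (Fin n) (Fin n) ℂ} (hA : A.PosSemidef)
    {c : ℝ} (hc : 0 ≤ c) : (((c : ℝ) : ℂ) • A).PosSemidef := by
  refine ⟨?_, fun x => ?_⟩
  · show (((c : ℝ) : ℂ) • A)ᴴ = ((c : ℝ) : ℂ) • A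
    rw [Matrix.conjTranspose_smul, hA.1.eq, Complex.star_def, Complex.conj_ofReal]
  · have e : (x.sum fun i xi => x.sum fun j xj => star xi * (((c : ℝ) : ℂ) • A) i j * xj) =
        ((c : ℝ) : ℂ) * x.sum fun i xi => x.sum fun j xj => star xi * A i j * xj := by
      simp only [Finsupp.sum, Finset.mul_sum, Matrix.smul_apply, smul_eq_mul]
      exact Finset.sum_congr rfl fun i _ => Finset.sum_congr rfl fun j _ => by ring
    rw [e]
    exact mul_nonneg (by exact_mod_cast hc) (hA.2 x)

private lemma mat_eq_of_zero {n : ℕ} (hn : n = 0) (A B : Matrix (Fin n) (Fin n) ℂ) : A = B := by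
  subst hn
  ext i j
  exact i.elim0

private lemma summable_of_tsum_one {n : ℕ} (hn : n ≠ 0) {ι : Type*}
    (f : ι → Matrix (Fin n) (Fin n) ℂ) (h : ∑' i, f i = 1) : Summable f := by
  by_contra hs
  rw [tsum_eq_zero_of_not_summable hs] at h
  have h0 : (0 : ℕ) < n := Nat.pos_of_ne_zero hn
  have := congrArg (fun M : Matrix (Fin n) (Fin n) ℂ => M ⟨0, h0⟩ ⟨0, h0⟩) h
  simp [Matrix.one_apply] at this

private lemma probDist_summable {J : Type} [Countable J] {p : J → ℝ}
    (hp : IsProbDist p) : Summable p := by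
  by_contra hs
  have := hp.2
  rw [tsum_eq_zero_of_not_summable hs] at this
  norm_num at this

private lemma jm_symm {n : ℕ} {J K : Type} [Countable J] [Countable K]
    {M₁ : J → Matrix (Fin n) (Fin n) ℂ} {M₂ : K → Matrix (Fin n) (Fin n) ℂ}
    (h : JointlyMeasurable M₁ M₂) : JointlyMeasurable M₂ M₁ := by
  obtain ⟨G, ⟨hpsd, hsum⟩, h1, h2⟩ := h
  refine ⟨fun x => G (x.2, x.1), ⟨fun x => hpsd _, ?_⟩, h2, h1⟩
  rw [← hsum]
  exact (Equiv.prodComm K J).tsum_eq G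

private lemma mix_step {n : ℕ} {J K : Type} [Countable J] [Countable K]
    {A : J → Matrix (Fin n) (Fin n) ℂ} {B : K → Matrix (Fin n) (Fin n) ℂ}
    (hB : ∀ k, (B k).PosSemidef)
    {p : J → ℝ} (hp : IsProbDist p) {q : ℝ} (hq0 : 0 ≤ q) (hq1 : q ≤ 1)
    (h : JointlyMeasurable A B) :
    JointlyMeasurable
      (fun j => ((q : ℝ) : ℂ) • A j + ((1 - q : ℝ) : ℂ) • ((p j : ℝ) : ℂ) • 1) B := by
  obtain ⟨G, ⟨hGpsd, hGsum⟩, hG1, hG2⟩ := h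
  rcases Nat.eq_zero_or_pos n with hn | hn
  · exact ⟨G, ⟨hGpsd, mat_eq_of_zero hn _ _⟩, fun j => mat_eq_of_zero hn _ _,
      fun k => mat_eq_of_zero hn _ _⟩
  have hn' : n ≠ 0 := hn.ne'
  have hGs : Summable G := summable_of_tsum_one hn' G hGsum
  -- the swapped family
  have hf : Summable fun x : K × J => G (x.2, x.1) :=
    (Equiv.prodComm K J).summable_iff.mpr hGs
  have hfts : ∑' x : K × J, G (x.2, x.1) = 1 := by
    rw [← hGsum]
    exact (Equiv.prodComm K J).tsum_eq G
  have hfib : ∀ k, HasSum (fun j => G (j, k)) (B k) := by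
    intro k
    have h1 := (hf.prod_factor k).hasSum
    have h2 : ∑' j, G (j, k) = B k := hG2 k
    rwa [h2] at h1
  have hB1 : HasSum B 1 := by
    have := HasSum.prod_fiberwise (hfts ▸ hf.hasSum) hfib
    exact this
  have hBs : Summable B := hB1.summable
  have hBts : ∑' k, B k = 1 := hB1.tsum_eq
  have hps : Summable p := probDist_summable hp
  have hpc : Summable fun j => ((p j : ℝ) : ℂ) := Complex.summable_ofReal.mpr hps
  have hpcts : ∑' j, ((p j : ℝ) : ℂ) = 1 := by
    rw [← Complex.ofReal_tsum, hp.2, Complex.ofReal_one]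
  -- summability of the product family
  have hPB : Summable fun x : J × K => ((p x.1 : ℝ) : ℂ) • B x.2 := by
    apply Summable.of_norm
    have hpn : Summable fun j => ‖((p j : ℝ) : ℂ)‖ := by
      simpa [Complex.norm_real, Real.norm_eq_abs] using hps.abs
    have hBn : Summable fun k => ‖B k‖ := hBs.norm
    have := Summable.mul_of_nonneg hpn hBn (fun j => norm_nonneg _) (fun k => norm_nonneg _)
    simpa [norm_smul] using this
  have hPBts : ∑' x : J × K, ((p x.1 : ℝ) : ℂ) • B x.2 = 1 := by
    rw [← tsum_smul_tsum hpc hBs hPB, hpcts, hBts, one_smul]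
  refine ⟨fun x => ((q : ℝ) : ℂ) • G x + ((1 - q : ℝ) : ℂ) • ((p x.1 : ℝ) : ℂ) • B x.2,
    ⟨?_, ?_⟩, ?_, ?_⟩
  · intro x
    exact (psd_csmul (hGpsd x) hq0).add
      (psd_csmul (psd_csmul (hB x.2) (hp.1 x.1)) (by linarith))
  · rw [Summable.tsum_add (hGs.const_smul _) (hPB.const_smul _),
      Summable.tsum_const_smul _ hGs, Summable.tsum_const_smul _ hPB, hGsum, hPBts]
    rw [← add_smul]
    have : ((q : ℝ) : ℂ) + ((1 - q : ℝ) : ℂ) = 1 := by push_cast; ring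
    rw [this, one_smul]
  · intro j
    have hs1 : Summable fun k => G (j, k) := hGs.prod_factor j
    have hs2 : Summable fun k => ((p j : ℝ) : ℂ) • B k := hBs.const_smul _
    rw [Summable.tsum_add (hs1.const_smul _) (hs2.const_smul _),
      Summable.tsum_const_smul _ hs1, Summable.tsum_const_smul _ hs2, Summable.tsum_const_smul _ hBs,
      hG1 j, hBts]
  · intro k
    have hs1 : Summable fun j => G (j, k) := (hfib k).summable
    have hs2 : Summable fun j => ((p j : ℝ) : ℂ) • B k := hpc.smul_const _
    rw [Summable.tsum_add (hs1.const_smul _) (hs2.const_smul _),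
      Summable.tsum_const_smul _ hs1, Summable.tsum_const_smul _ hs2, Summable.tsum_smul_const hpc,
      hG2 k, hpcts, one_smul, ← add_smul]
    have : ((q : ℝ) : ℂ) + ((1 - q : ℝ) : ℂ) = 1 := by push_cast; ring
    rw [this, one_smul]

end Aux

private lemma exists_ratio {a b : ℝ} (ha : 0 ≤ a) (hab : a ≤ b) (hb1 : b ≤ 1) :
    ∃ q : ℝ, 0 ≤ q ∧ q ≤ 1 ∧ q * b = a := by
  by_cases hb : b = 0
  · refine ⟨0, le_refl 0, by norm_num, ?_⟩
    have : a = 0 := le_antisymm (hb ▸ hab) ha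
    simp [this]
  · have hb0 : 0 < b := lt_of_le_of_ne (le_trans ha hab) (Ne.symm hb)
    exact ⟨a / b, div_nonneg ha hb0.le, div_le_one_of_le₀ hab hb0.le, div_mul_cancel₀ a hb⟩

/-- The joint measurability region is downward monotone. -/
theorem jRegion_downward_monotone {n : ℕ} {J K : Type} [Countable J] [Countable K]
    (M₁ : J → Matrix (Fin n) (Fin n) ℂ) (M₂ : K → Matrix (Fin n) (Fin n) ℂ)
    (hM₁ : IsPOVM M₁) (hM₂ : IsPOVM M₂)
    (l m l' m' : ℝ) (hl1 : l ≤ 1) (hm1 : m ≤ 1)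
    (hl' : 0 ≤ l') (hl'l : l' ≤ l) (hm' : 0 ≤ m') (hm'm : m' ≤ m)
    (T₁ : J → Matrix (Fin n) (Fin n) ℂ) (T₂ : K → Matrix (Fin n) (Fin n) ℂ)
    (hT₁ : IsTrivialPOVM T₁) (hT₂ : IsTrivialPOVM T₂)
    (hJM : JointlyMeasurable (mix l M₁ T₁) (mix m M₂ T₂)) :
    ∃ (T₁' : J → Matrix (Fin n) (Fin n) ℂ) (T₂' : K → Matrix (Fin n) (Fin n) ℂ),
      IsTrivialPOVM T₁' ∧ IsTrivialPOVM T₂' ∧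
        JointlyMeasurable (mix l' M₁ T₁') (mix m' M₂ T₂') := by
  obtain ⟨p₁, hp₁, hT₁e⟩ := hT₁
  obtain ⟨p₂, hp₂, hT₂e⟩ := hT₂
  have hl0 : 0 ≤ l := le_trans hl' hl'l
  have hm0 : 0 ≤ m := le_trans hm' hm'm
  have hl'1 : l' ≤ 1 := le_trans hl'l hl1
  have hm'1 : m' ≤ 1 := le_trans hm'm hm1
  obtain ⟨q, hq0, hq1, hql⟩ := exists_ratio hl' hl'l hl1
  obtain ⟨r, hr0, hr1, hrm⟩ := exists_ratio hm' hm'm hm1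
  have hpsdB : ∀ k, (mix m M₂ T₂ k).PosSemidef := by
    intro k
    simp only [mix, hT₂e k]
    exact (psd_csmul (hM₂.1 k) hm0).add
      (psd_csmul (psd_csmul Matrix.PosSemidef.one (hp₂.1 k)) (by linarith))
  have hpsdA' : ∀ j, (mix l' M₁ T₁ j).PosSemidef := by
    intro j
    simp only [mix, hT₁e j]
    exact (psd_csmul (hM₁.1 j) hl').add
      (psd_csmul (psd_csmul Matrix.PosSemidef.one (hp₁.1 j)) (by linarith))
  have step1 := mix_step hpsdB hp₁ hq0 hq1 hJM
  have hrw1 : (fun j => ((q : ℝ) : ℂ) • mix l M₁ T₁ j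
      + ((1 - q : ℝ) : ℂ) • ((p₁ j : ℝ) : ℂ) • 1) = mix l' M₁ T₁ := by
    funext j
    simp only [mix, hT₁e j]
    have hc1 : ((l' : ℝ) : ℂ) = ((q : ℝ) : ℂ) * ((l : ℝ) : ℂ) := by
      rw [← hql]; push_cast; ring
    have hc2 : ((1 - l' : ℝ) : ℂ) = ((q : ℝ) : ℂ) * ((1 - l : ℝ) : ℂ) + ((1 - q : ℝ) : ℂ) := by
      rw [show (1 - l' : ℝ) = q * (1 - l) + (1 - q) from by rw [← hql]; ring]
      push_cast; ring
    rw [hc1, hc2, smul_add, smul_smul, smul_smul, add_smul, add_assoc,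
      ← smul_smul ((q : ℝ) : ℂ) ((1 - l : ℝ) : ℂ)]
  rw [hrw1] at step1
  have step2 := mix_step hpsdA' hp₂ hr0 hr1 (jm_symm step1)
  have hrw2 : (fun k => ((r : ℝ) : ℂ) • mix m M₂ T₂ k
      + ((1 - r : ℝ) : ℂ) • ((p₂ k : ℝ) : ℂ) • 1) = mix m' M₂ T₂ := by
    funext k
    simp only [mix, hT₂e k]
    have hc1 : ((m' : ℝ) : ℂ) = ((r : ℝ) : ℂ) * ((m : ℝ) : ℂ) := by
      rw [← hrm]; push_cast; ring
    have hc2 : ((1 - m' : ℝ) : ℂ) = ((r : ℝ) : ℂ) * ((1 - m : ℝ) : ℂ) + ((1 - r : ℝ) : ℂ) := by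
      rw [show (1 - m' : ℝ) = r * (1 - m) + (1 - r) from by rw [← hrm]; ring]
      push_cast; ring
    rw [hc1, hc2, smul_add, smul_smul, smul_smul, add_smul, add_assoc,
      ← smul_smul ((r : ℝ) : ℂ) ((1 - m : ℝ) : ℂ)]
  rw [hrw2] at step2
  exact ⟨T₁, T₂, ⟨p₁, hp₁, hT₁e⟩, ⟨p₂, hp₂, hT₂e⟩, jm_symm step2⟩
end

section
/- If two binary ±1-valued POVMs A and B on a Hilbert space H are jointly measurable, then for any state ρ on H⊗K and any binary POVMs N₁, N₂ on K, the CHSH expression |⟨A⊗N₁⟩ + ⟨A⊗N₂⟩ + ⟨B⊗N₁⟩ − ⟨B⊗N₂⟩| is at most 2. -/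
open scoped ComplexOrder
open Kronecker

section CHSHAux
open Matrix

lemma conjTranspose_kron {n m : ℕ} (A : Matrix (Fin n) (Fin n) ℂ) (B : Matrix (Fin m) (Fin m) ℂ) :
    (A ⊗ₖ B)ᴴ = Aᴴ ⊗ₖ Bᴴ := by
  ext ⟨i₁, i₂⟩ ⟨j₁, j₂⟩
  simp [Matrix.conjTranspose_apply, Matrix.kronecker_apply, mul_comm]

lemma sub_kron {l m n p : ℕ} (A B : Matrix (Fin l) (Fin m) ℂ) (C : Matrix (Fin n) (Fin p) ℂ) :
    (A - B) ⊗ₖ C = A ⊗ₖ C - B ⊗ₖ C := by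
  ext ⟨i₁, i₂⟩ ⟨j₁, j₂⟩
  simp [Matrix.kronecker_apply, sub_mul]

lemma kron_sub_right {l m n p : ℕ} (A : Matrix (Fin l) (Fin m) ℂ) (B C : Matrix (Fin n) (Fin p) ℂ) :
    A ⊗ₖ (B - C) = A ⊗ₖ B - A ⊗ₖ C := by
  ext ⟨i₁, i₂⟩ ⟨j₁, j₂⟩
  simp [Matrix.kronecker_apply, mul_sub]

lemma kron_psd {n m : ℕ} {A : Matrix (Fin n) (Fin n) ℂ} {B : Matrix (Fin m) (Fin m) ℂ}
    (hA : A.PosSemidef) (hB : B.PosSemidef) : (A ⊗ₖ B).PosSemidef := by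
  obtain ⟨C, hC⟩ : ∃ C : Matrix (Fin n) (Fin n) ℂ, A = Cᴴ * C := by
    open MatrixOrder in exact CStarAlgebra.nonneg_iff_eq_star_mul_self.mp hA.nonneg
  obtain ⟨D, hD⟩ : ∃ D : Matrix (Fin m) (Fin m) ℂ, B = Dᴴ * D := by
    open MatrixOrder in exact CStarAlgebra.nonneg_iff_eq_star_mul_self.mp hB.nonneg
  rw [hC, hD, Matrix.mul_kronecker_mul, ← conjTranspose_kron]
  exact Matrix.posSemidef_conjTranspose_mul_self _

lemma trace_psd_nonneg {d : Type*} [Fintype d] [DecidableEq d] {X : Matrix d d ℂ} (hX : X.PosSemidef) :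
    0 ≤ X.trace := by
  rw [Matrix.trace]
  apply Finset.sum_nonneg
  intro i _
  have := hX.diag_nonneg (i := i)
  simpa [Matrix.mulVec, dotProduct, Pi.single_apply, Matrix.diag] using this

lemma trace_mul_psd_nonneg {d : Type*} [Fintype d] [DecidableEq d] {ρ X : Matrix d d ℂ}
    (hρ : ρ.PosSemidef) (hX : X.PosSemidef) : 0 ≤ (ρ * X).trace := by
  obtain ⟨C, hC⟩ : ∃ C : Matrix d d ℂ, ρ = Cᴴ * C := by
    open MatrixOrder in exact CStarAlgebra.nonneg_iff_eq_star_mul_self.mp hρ.nonneg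
  rw [hC, Matrix.mul_assoc, Matrix.trace_mul_comm]
  exact trace_psd_nonneg (hX.mul_mul_conjTranspose_same C)

lemma term_bound {n m : ℕ} {ρ : Matrix (Fin n × Fin m) (Fin n × Fin m) ℂ} (hρ : ρ.PosSemidef)
    {G : Matrix (Fin n) (Fin n) ℂ} (hG : G.PosSemidef)
    {C : Matrix (Fin m) (Fin m) ℂ}
    (h1 : ((1 : Matrix (Fin m) (Fin m) ℂ) - C).PosSemidef)
    (h2 : ((1 : Matrix (Fin m) (Fin m) ℂ) + C).PosSemidef) :
    ((ρ * (G ⊗ₖ C)).trace).im = 0 ∧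
      |((ρ * (G ⊗ₖ C)).trace).re| ≤ ((ρ * (G ⊗ₖ (1 : Matrix (Fin m) (Fin m) ℂ))).trace).re := by
  have hsub : 0 ≤ (ρ * (G ⊗ₖ ((1 : Matrix (Fin m) (Fin m) ℂ) - C))).trace :=
    trace_mul_psd_nonneg hρ (kron_psd hG h1)
  have hadd : 0 ≤ (ρ * (G ⊗ₖ ((1 : Matrix (Fin m) (Fin m) ℂ) + C))).trace :=
    trace_mul_psd_nonneg hρ (kron_psd hG h2)
  rw [kron_sub_right, Matrix.mul_sub, Matrix.trace_sub, Complex.nonneg_iff] at hsub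
  rw [Matrix.kronecker_add, Matrix.mul_add, Matrix.trace_add, Complex.nonneg_iff] at hadd
  obtain ⟨hs1, hs2⟩ := hsub
  obtain ⟨ha1, ha2⟩ := hadd
  simp only [Complex.sub_re, Complex.sub_im, Complex.add_re, Complex.add_im] at *
  refine ⟨by linarith, abs_le.mpr ⟨by linarith, by linarith⟩⟩

lemma abs_of_im_zero (z : ℂ) (h : z.im = 0) : ‖z‖ = |z.re| := by
  have h2 := (Complex.norm_real z.re).trans (Real.norm_eq_abs z.re)
  rw [← h2]
  congr 1
  exact Complex.ext rfl (by simp [h])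

end CHSHAux

/-- Jointly measurable binary observables on one side cannot violate the
Bell-CHSH inequality: the CHSH expression is bounded by 2 in every state and for all
binary observables on the other side. -/
theorem jointly_measurable_implies_chsh {n m : ℕ}
    (A B : Bool → Matrix (Fin n) (Fin n) ℂ) (hA : IsPOVM A) (hB : IsPOVM B)
    (N₁ N₂ : Bool → Matrix (Fin m) (Fin m) ℂ) (hN₁ : IsPOVM N₁) (hN₂ : IsPOVM N₂)
    (hJM : JointlyMeasurable A B)
    (ρ : Matrix (Fin n × Fin m) (Fin n × Fin m) ℂ)
    (hρ : ρ.PosSemidef) (hρtr : ρ.trace = 1) :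
    ‖((ρ * ((A true - A false) ⊗ₖ (N₁ true - N₁ false))).trace
          + (ρ * ((A true - A false) ⊗ₖ (N₂ true - N₂ false))).trace
          + (ρ * ((B true - B false) ⊗ₖ (N₁ true - N₁ false))).trace
          - (ρ * ((B true - B false) ⊗ₖ (N₂ true - N₂ false))).trace)‖ ≤ 2 := by
  obtain ⟨G, ⟨hGpos, hGsum⟩, hGA, hGB⟩ := hJM
  rw [tsum_fintype, Fintype.sum_prod_type] at hGsum
  simp only [Fintype.sum_bool] at hGsum
  have hAeq : ∀ j, A j = G (j, true) + G (j, false) := fun j => by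
    rw [← hGA j, tsum_fintype, Fintype.sum_bool]
  have hBeq : ∀ k, B k = G (true, k) + G (false, k) := fun k => by
    rw [← hGB k, tsum_fintype, Fintype.sum_bool]
  have hN1 : N₁ true + N₁ false = 1 := by
    have h := hN₁.2; rwa [tsum_fintype, Fintype.sum_bool] at h
  have hN2 : N₂ true + N₂ false = 1 := by
    have h := hN₂.2; rwa [tsum_fintype, Fintype.sum_bool] at h
  set D₁ := N₁ true - N₁ false with hD₁
  set D₂ := N₂ true - N₂ false with hD₂
  have h11 : ((1 : Matrix (Fin m) (Fin m) ℂ) - D₁).PosSemidef := by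
    have h : (1 : Matrix (Fin m) (Fin m) ℂ) - D₁ = N₁ false + N₁ false := by
      rw [← hN1, hD₁]; abel
    rw [h]; exact (hN₁.1 false).add (hN₁.1 false)
  have h12 : ((1 : Matrix (Fin m) (Fin m) ℂ) + D₁).PosSemidef := by
    have h : (1 : Matrix (Fin m) (Fin m) ℂ) + D₁ = N₁ true + N₁ true := by
      rw [← hN1, hD₁]; abel
    rw [h]; exact (hN₁.1 true).add (hN₁.1 true)
  have h21 : ((1 : Matrix (Fin m) (Fin m) ℂ) - D₂).PosSemidef := by
    have h : (1 : Matrix (Fin m) (Fin m) ℂ) - D₂ = N₂ false + N₂ false := by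
      rw [← hN2, hD₂]; abel
    rw [h]; exact (hN₂.1 false).add (hN₂.1 false)
  have h22 : ((1 : Matrix (Fin m) (Fin m) ℂ) + D₂).PosSemidef := by
    have h : (1 : Matrix (Fin m) (Fin m) ℂ) + D₂ = N₂ true + N₂ true := by
      rw [← hN2, hD₂]; abel
    rw [h]; exact (hN₂.1 true).add (hN₂.1 true)
  obtain ⟨itt, rtt⟩ := term_bound hρ (hGpos (true, true)) h11 h12
  obtain ⟨itf, rtf⟩ := term_bound hρ (hGpos (true, false)) h21 h22
  obtain ⟨ift, rft⟩ := term_bound hρ (hGpos (false, true)) h21 h22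
  obtain ⟨iff', rff⟩ := term_bound hρ (hGpos (false, false)) h11 h12
  have key : (A true - A false) ⊗ₖ D₁ + (A true - A false) ⊗ₖ D₂
      + (B true - B false) ⊗ₖ D₁ - (B true - B false) ⊗ₖ D₂
      = (G (true, true) ⊗ₖ D₁ + G (true, true) ⊗ₖ D₁)
        + (G (true, false) ⊗ₖ D₂ + G (true, false) ⊗ₖ D₂)
        - (G (false, true) ⊗ₖ D₂ + G (false, true) ⊗ₖ D₂)
        - (G (false, false) ⊗ₖ D₁ + G (false, false) ⊗ₖ D₁) := by
    rw [hAeq true, hAeq false, hBeq true, hBeq false]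
    simp only [sub_kron, Matrix.add_kronecker]
    abel
  have key' := congrArg (fun M => (ρ * M).trace) key
  simp only [Matrix.mul_add, Matrix.mul_sub, Matrix.trace_add, Matrix.trace_sub] at key'
  rw [key']
  have hsumt : (ρ * (G (true, true) ⊗ₖ (1 : Matrix (Fin m) (Fin m) ℂ))).trace
      + (ρ * (G (true, false) ⊗ₖ (1 : Matrix (Fin m) (Fin m) ℂ))).trace
      + (ρ * (G (false, true) ⊗ₖ (1 : Matrix (Fin m) (Fin m) ℂ))).trace
      + (ρ * (G (false, false) ⊗ₖ (1 : Matrix (Fin m) (Fin m) ℂ))).trace = 1 := by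
    have hcollapse : G (true, true) ⊗ₖ (1 : Matrix (Fin m) (Fin m) ℂ)
        + G (true, false) ⊗ₖ (1 : Matrix (Fin m) (Fin m) ℂ)
        + G (false, true) ⊗ₖ (1 : Matrix (Fin m) (Fin m) ℂ)
        + G (false, false) ⊗ₖ (1 : Matrix (Fin m) (Fin m) ℂ)
        = (1 : Matrix (Fin n × Fin m) (Fin n × Fin m) ℂ) := by
      rw [← Matrix.add_kronecker, ← Matrix.add_kronecker, ← Matrix.add_kronecker,
        ← Matrix.one_kronecker_one (α := ℂ)]
      congr 1
      rw [← hGsum]; abel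
    calc (ρ * (G (true, true) ⊗ₖ (1 : Matrix (Fin m) (Fin m) ℂ))).trace
          + (ρ * (G (true, false) ⊗ₖ (1 : Matrix (Fin m) (Fin m) ℂ))).trace
          + (ρ * (G (false, true) ⊗ₖ (1 : Matrix (Fin m) (Fin m) ℂ))).trace
          + (ρ * (G (false, false) ⊗ₖ (1 : Matrix (Fin m) (Fin m) ℂ))).trace
        = (ρ * (G (true, true) ⊗ₖ (1 : Matrix (Fin m) (Fin m) ℂ)
            + G (true, false) ⊗ₖ (1 : Matrix (Fin m) (Fin m) ℂ)
            + G (false, true) ⊗ₖ (1 : Matrix (Fin m) (Fin m) ℂ)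
            + G (false, false) ⊗ₖ (1 : Matrix (Fin m) (Fin m) ℂ))).trace := by
          simp [Matrix.mul_add, Matrix.trace_add]
      _ = 1 := by rw [hcollapse, Matrix.mul_one, hρtr]
  have hsumre := congrArg Complex.re hsumt
  simp only [Complex.add_re, Complex.one_re] at hsumre
  rw [abs_le] at rtt rtf rft rff
  rw [abs_of_im_zero _ (by simp [Complex.add_im, Complex.sub_im, itt, itf, ift, iff'])]
  rw [abs_le]
  constructor <;> simp only [Complex.add_re, Complex.sub_re, neg_le] <;>
    [linarith [rtt.1, rtf.1, rft.2, rff.2]; linarith [rtt.2, rtf.2, rft.1, rff.1]]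
end
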